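/- For n ≥ 1, the signed count over all overpartitions π of n, weighted by (-1)^{ℓ_{O≤N}(π)}, equals 2·D_e(n), twice the number of partitions of n into distinct parts with an even number of parts. Here ℓ_{O≤N}(π) is the number of overlined parts of π of size less than or equal to the largest non-overlined part (counting all overlined parts if there is no non-overlined part). -/

import Mathlib

open scoped Classical

/-- An overpartition of `n`: a finite set of overlined part sizes (the first
occurrence of a size may be overlined, so overlined parts are distinct)
together with a multiset of non-overlined parts, all parts positive,
with total sum `n`. -/
structure Overpartition (n : ℕ) where
  over' : Finset ℕ
  plain : Multiset ℕ
  over_pos : ∀ x ∈ over', 0 < x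
  plain_pos : ∀ x ∈ plain, 0 < x
  sum_eq : (∑ x ∈ over', x) + plain.sum = n
/-- Number of overlined parts of size at most the largest non-overlined part;
all overlined parts count if there is no non-overlined part. -/
noncomputable def lOleN {n : ℕ} (π : Overpartition n) : ℕ :=
  if π.plain = 0 then π.over'.card
  else (π.over'.filter (fun x => ∃ y ∈ π.plain, x ≤ y)).card

namespace OPProof

variable {n : ℕ}

theorem op_ext {π σ : Overpartition n} (h1 : π.over' = σ.over')
    (h2 : π.plain = σ.plain) : π = σ := by
  cases π; cases σ; simp_all

lemma sum_val (s : Finset ℕ) : (∑ x ∈ s, x) = s.1.sum := by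
  rw [Finset.sum_eq_multiset_sum, Multiset.map_id']

/-- the overlined parts that are at most some plain part -/
noncomputable def Sset (π : Overpartition n) : Finset ℕ :=
  π.over'.filter fun x => ∃ y ∈ π.plain, x ≤ y

lemma lOleN_eq_card {π : Overpartition n} (h : π.plain ≠ 0) :
    lOleN π = (Sset π).card := if_neg h

def isF (π : Overpartition n) : Prop :=
  Multiset.card π.plain = 1 ∧ Sset π = ∅

def inC (π : Overpartition n) : Prop := ¬ π.plain = 0 ∧ ¬ isF π

noncomputable def Mset (π : Overpartition n) : Finset ℕ :=
  π.plain.toFinset ∪ Sset π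

lemma Mset_nonempty {π : Overpartition n} (h : π.plain ≠ 0) :
    (Mset π).Nonempty :=
  Finset.Nonempty.mono Finset.subset_union_left (Multiset.toFinset_nonempty.2 h)

noncomputable def mm (π : Overpartition n) : ℕ :=
  if h : (Mset π).Nonempty then (Mset π).min' h else 0

lemma mm_mem {π : Overpartition n} (h : π.plain ≠ 0) : mm π ∈ Mset π := by
  rw [mm, dif_pos (Mset_nonempty h)]; exact Finset.min'_mem _ _

lemma mm_le {π : Overpartition n} (h : π.plain ≠ 0) :
    ∀ b ∈ Mset π, mm π ≤ b := by
  intro b hb; rw [mm, dif_pos (Mset_nonempty h)]; exact Finset.min'_le _ _ hb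

lemma mm_eq {π : Overpartition n} (h : π.plain ≠ 0) {a : ℕ}
    (ha : a ∈ Mset π) (hle : ∀ b ∈ Mset π, a ≤ b) : mm π = a :=
  le_antisymm (mm_le h a ha) (hle _ (mm_mem h))

lemma mm_le_plain {π : Overpartition n} (h : π.plain ≠ 0) :
    ∀ y ∈ π.plain, mm π ≤ y := fun y hy =>
  mm_le h y (Finset.mem_union_left _ (Multiset.mem_toFinset.2 hy))

lemma exists_plain_ge {π : Overpartition n} (h : π.plain ≠ 0) :
    ∃ y ∈ π.plain, mm π ≤ y := by
  obtain ⟨y, hy⟩ := Multiset.exists_mem_of_ne_zero h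
  exact ⟨y, hy, mm_le_plain h y hy⟩

lemma mm_cases {π : Overpartition n} (h : π.plain ≠ 0) :
    mm π ∈ π.plain ∨ mm π ∈ π.over' := by
  rcases Finset.mem_union.1 (mm_mem h) with h' | h'
  · exact Or.inl (Multiset.mem_toFinset.1 h')
  · exact Or.inr (Finset.mem_filter.1 h').1

lemma mm_pos {π : Overpartition n} (h : π.plain ≠ 0) : 0 < mm π := by
  rcases mm_cases h with h' | h'
  · exact π.plain_pos _ h'
  · exact π.over_pos _ h'

lemma mm_mem_plain {π : Overpartition n} (h : π.plain ≠ 0)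
    (hm : mm π ∉ π.over') : mm π ∈ π.plain := by
  rcases mm_cases h with h' | h'
  · exact h'
  · exact absurd h' hm

lemma mm_mem_Sset {π : Overpartition n} (h : π.plain ≠ 0)
    (hm : mm π ∈ π.over') : mm π ∈ Sset π :=
  Finset.mem_filter.2 ⟨hm, exists_plain_ge h⟩

lemma erase_ne_zero {π : Overpartition n} (hC : inC π)
    (hm : mm π ∉ π.over') : π.plain.erase (mm π) ≠ 0 := by
  intro h0
  have hp : π.plain = {mm π} := by
    have := Multiset.cons_erase (mm_mem_plain hC.1 hm)
    rw [h0] at this; exact this.symm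
  apply hC.2
  constructor
  · rw [hp]; simp
  · apply Finset.eq_empty_of_forall_notMem
    intro x hx
    obtain ⟨hxo, y, hy, hxy⟩ := Finset.mem_filter.1 hx
    rw [hp, Multiset.mem_singleton] at hy
    subst hy
    have : mm π ≤ x := mm_le hC.1 x (Finset.mem_union_right _ hx)
    have : x = mm π := le_antisymm hxy this
    subst this; exact hm hxo

lemma pred_cons {π : Overpartition n} (h : π.plain ≠ 0) (x : ℕ) :
    (∃ y ∈ (mm π ::ₘ π.plain), x ≤ y) ↔ (∃ y ∈ π.plain, x ≤ y) := by
  constructor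
  · rintro ⟨y, hy, hxy⟩
    rcases Multiset.mem_cons.1 hy with rfl | hy'
    · obtain ⟨z, hz, hz'⟩ := exists_plain_ge h
      exact ⟨z, hz, hxy.trans hz'⟩
    · exact ⟨y, hy', hxy⟩
  · rintro ⟨y, hy, hxy⟩
    exact ⟨y, Multiset.mem_cons_of_mem hy, hxy⟩

lemma pred_erase {π : Overpartition n} (hC : inC π)
    (hm : mm π ∉ π.over') (x : ℕ) :
    (∃ y ∈ π.plain.erase (mm π), x ≤ y) ↔ (∃ y ∈ π.plain, x ≤ y) := by
  constructor
  · rintro ⟨y, hy, hxy⟩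
    exact ⟨y, Multiset.mem_of_mem_erase hy, hxy⟩
  · rintro ⟨y, hy, hxy⟩
    obtain ⟨z, hz⟩ := Multiset.exists_mem_of_ne_zero (erase_ne_zero hC hm)
    have hzp : z ∈ π.plain := Multiset.mem_of_mem_erase hz
    by_cases hym : y = mm π
    · subst hym
      exact ⟨z, hz, hxy.trans (mm_le_plain hC.1 z hzp)⟩
    · exact ⟨y, (Multiset.mem_erase_of_ne hym).2 hy, hxy⟩

noncomputable def iota (π : Overpartition n) : Overpartition n :=
  if hC : inC π then
    if hm : mm π ∈ π.over' then
      { over' := π.over'.erase (mm π)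
        plain := mm π ::ₘ π.plain
        over_pos := fun x hx => π.over_pos x (Finset.mem_of_mem_erase hx)
        plain_pos := by
          intro x hx
          rcases Multiset.mem_cons.1 hx with rfl | hx'
          · exact mm_pos hC.1
          · exact π.plain_pos x hx'
        sum_eq := by
          have := Finset.add_sum_erase π.over' id hm
          have hs := π.sum_eq
          simp only [id] at this
          rw [Multiset.sum_cons]
          omega }
    else
      { over' := insert (mm π) π.over'
        plain := π.plain.erase (mm π)
        over_pos := by
          intro x hx
          rcases Finset.mem_insert.1 hx with rfl | hx'
          · exact mm_pos hC.1
          · exact π.over_pos x hx'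
        plain_pos := fun x hx => π.plain_pos x (Multiset.mem_of_mem_erase hx)
        sum_eq := by
          have h1 : mm π ::ₘ π.plain.erase (mm π) = π.plain :=
            Multiset.cons_erase (mm_mem_plain hC.1 hm)
          have h2 : (mm π ::ₘ π.plain.erase (mm π)).sum = π.plain.sum := by
            rw [h1]
          rw [Multiset.sum_cons] at h2
          rw [Finset.sum_insert hm]
          have hs := π.sum_eq
          omega }
  else π

lemma iota_over_1 {π : Overpartition n} (hC : inC π) (hm : mm π ∈ π.over') :
    (iota π).over' = π.over'.erase (mm π) := by
  rw [iota, dif_pos hC, dif_pos hm]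

lemma iota_plain_1 {π : Overpartition n} (hC : inC π) (hm : mm π ∈ π.over') :
    (iota π).plain = mm π ::ₘ π.plain := by
  rw [iota, dif_pos hC, dif_pos hm]

lemma iota_over_2 {π : Overpartition n} (hC : inC π) (hm : mm π ∉ π.over') :
    (iota π).over' = insert (mm π) π.over' := by
  rw [iota, dif_pos hC, dif_neg hm]

lemma iota_plain_2 {π : Overpartition n} (hC : inC π) (hm : mm π ∉ π.over') :
    (iota π).plain = π.plain.erase (mm π) := by
  rw [iota, dif_pos hC, dif_neg hm]

lemma iota_plain_ne {π : Overpartition n} (hC : inC π) :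
    (iota π).plain ≠ 0 := by
  by_cases hm : mm π ∈ π.over'
  · rw [iota_plain_1 hC hm]; exact Multiset.cons_ne_zero
  · rw [iota_plain_2 hC hm]; exact erase_ne_zero hC hm

lemma Sset_iota_1 {π : Overpartition n} (hC : inC π) (hm : mm π ∈ π.over') :
    Sset (iota π) = (Sset π).erase (mm π) := by
  ext x
  simp only [Sset, iota_over_1 hC hm, iota_plain_1 hC hm,
    Finset.mem_filter, Finset.mem_erase, pred_cons hC.1]
  tauto

lemma Sset_iota_2 {π : Overpartition n} (hC : inC π) (hm : mm π ∉ π.over') :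
    Sset (iota π) = insert (mm π) (Sset π) := by
  ext x
  simp only [Sset, iota_over_2 hC hm, iota_plain_2 hC hm,
    Finset.mem_filter, Finset.mem_insert, pred_erase hC hm]
  constructor
  · rintro ⟨(rfl | h), hP⟩
    · exact Or.inl rfl
    · exact Or.inr ⟨h, hP⟩
  · rintro (rfl | ⟨h, hP⟩)
    · exact ⟨Or.inl rfl, exists_plain_ge hC.1⟩
    · exact ⟨Or.inr h, hP⟩

lemma inC_iota {π : Overpartition n} (hC : inC π) : inC (iota π) := by
  refine ⟨iota_plain_ne hC, ?_⟩
  by_cases hm : mm π ∈ π.over'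
  · rintro ⟨h1, -⟩
    rw [iota_plain_1 hC hm, Multiset.card_cons] at h1
    have h0 : Multiset.card π.plain ≠ 0 :=
      fun hc => hC.1 (Multiset.card_eq_zero.1 hc)
    omega
  · rintro ⟨-, h2⟩
    rw [Sset_iota_2 hC hm] at h2
    exact (Finset.insert_ne_empty _ _) h2

lemma mm_not_mem_Sset {π : Overpartition n} (hm : mm π ∉ π.over') :
    mm π ∉ Sset π := fun h => hm (Finset.mem_filter.1 h).1

lemma parity_iota {π : Overpartition n} (hC : inC π) :
    Even (lOleN (iota π)) ↔ ¬ Even (lOleN π) := by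
  rw [lOleN_eq_card (iota_plain_ne hC), lOleN_eq_card hC.1]
  by_cases hm : mm π ∈ π.over'
  · rw [Sset_iota_1 hC hm,
      Finset.card_erase_of_mem (mm_mem_Sset hC.1 hm)]
    have h1 : 1 ≤ (Sset π).card :=
      Finset.card_pos.2 ⟨mm π, mm_mem_Sset hC.1 hm⟩
    rw [Nat.even_sub h1]
    simp
  · rw [Sset_iota_2 hC hm,
      Finset.card_insert_of_notMem (mm_not_mem_Sset hm)]
    simp [Nat.even_add_one]

lemma mm_iota_1 {π : Overpartition n} (hC : inC π) (hm : mm π ∈ π.over') :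
    mm (iota π) = mm π := by
  apply mm_eq (iota_plain_ne hC)
  · rw [Mset, iota_plain_1 hC hm, Multiset.toFinset_cons]
    exact Finset.mem_union_left _ (Finset.mem_insert_self _ _)
  · intro b hb
    rw [Mset, iota_plain_1 hC hm, Sset_iota_1 hC hm,
      Multiset.toFinset_cons] at hb
    rcases Finset.mem_union.1 hb with hb' | hb'
    · rcases Finset.mem_insert.1 hb' with rfl | hb''
      · exact le_rfl
      · exact mm_le hC.1 b (Finset.mem_union_left _ hb'')
    · exact mm_le hC.1 b
        (Finset.mem_union_right _ (Finset.mem_of_mem_erase hb'))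

lemma mm_iota_2 {π : Overpartition n} (hC : inC π) (hm : mm π ∉ π.over') :
    mm (iota π) = mm π := by
  apply mm_eq (iota_plain_ne hC)
  · rw [Mset, Sset_iota_2 hC hm]
    exact Finset.mem_union_right _ (Finset.mem_insert_self _ _)
  · intro b hb
    rw [Mset, iota_plain_2 hC hm, Sset_iota_2 hC hm] at hb
    rcases Finset.mem_union.1 hb with hb' | hb'
    · have : b ∈ π.plain :=
        Multiset.mem_of_mem_erase (Multiset.mem_toFinset.1 hb')
      exact mm_le_plain hC.1 b this
    · rcases Finset.mem_insert.1 hb' with rfl | hb''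
      · exact le_rfl
      · exact mm_le hC.1 b (Finset.mem_union_right _ hb'')

lemma iota_iota {π : Overpartition n} (hC : inC π) : iota (iota π) = π := by
  by_cases hm : mm π ∈ π.over'
  · have hC' := inC_iota hC
    have hmm := mm_iota_1 hC hm
    have hm' : mm (iota π) ∉ (iota π).over' := by
      rw [hmm, iota_over_1 hC hm]
      exact Finset.notMem_erase _ _
    apply op_ext
    · rw [iota_over_2 hC' hm', hmm, iota_over_1 hC hm,
        Finset.insert_erase hm]
    · rw [iota_plain_2 hC' hm', hmm, iota_plain_1 hC hm,
        Multiset.erase_cons_head]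
  · have hC' := inC_iota hC
    have hmm := mm_iota_2 hC hm
    have hm' : mm (iota π) ∈ (iota π).over' := by
      rw [hmm, iota_over_2 hC hm]
      exact Finset.mem_insert_self _ _
    apply op_ext
    · rw [iota_over_1 hC' hm', hmm, iota_over_2 hC hm,
        Finset.erase_insert hm]
    · rw [iota_plain_1 hC' hm', hmm, iota_plain_2 hC hm,
        Multiset.cons_erase (mm_mem_plain hC.1 hm)]

/-- the sign-reversing involution as an equivalence -/
noncomputable def eqvC :
    {π : Overpartition n // Even (lOleN π) ∧ inC π} ≃
    {π : Overpartition n // Odd (lOleN π) ∧ inC π} where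
  toFun x := ⟨iota x.1, by
    refine ⟨?_, inC_iota x.2.2⟩
    rw [← Nat.not_even_iff_odd]
    intro h
    exact (parity_iota x.2.2).1 h x.2.1⟩
  invFun x := ⟨iota x.1, by
    refine ⟨?_, inC_iota x.2.2⟩
    exact (parity_iota x.2.2).2 (Nat.not_even_iff_odd.2 x.2.1)⟩
  left_inv x := Subtype.ext (iota_iota x.2.2)
  right_inv x := Subtype.ext (iota_iota x.2.2)


/-! ### Finiteness -/

def pad (hn : ℕ) (m : Multiset ℕ) (hpos : ∀ x ∈ m, 0 < x)
    (hle : m.sum ≤ hn) : hn.Partition where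
  parts := m + Multiset.replicate (hn - m.sum) 1
  parts_pos := by
    intro i hi
    rcases Multiset.mem_add.1 hi with h | h
    · exact hpos i h
    · rw [Multiset.eq_of_mem_replicate h]; norm_num
  parts_sum := by
    rw [Multiset.sum_add, Multiset.sum_replicate, smul_eq_mul, mul_one]
    omega

lemma pad_inj {hn : ℕ} {m₁ m₂ : Multiset ℕ} {h₁ h₂ l₁ l₂}
    (hs : m₁.sum = m₂.sum) (h : pad hn m₁ h₁ l₁ = pad hn m₂ h₂ l₂) :
    m₁ = m₂ := by
  have := congrArg Nat.Partition.parts h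
  simp only [pad, hs] at this
  exact add_right_cancel this

instance : Finite (Overpartition n) := by
  have key : ∀ π : Overpartition n, (∑ x ∈ π.over', x) ≤ n ∧ π.plain.sum ≤ n := by
    intro π
    have := π.sum_eq
    omega
  apply Finite.of_injective (β := n.Partition × n.Partition × Fin (n + 1))
    (fun π => (pad n π.over'.1 (fun x hx => π.over_pos x hx)
        (by rw [← sum_val]; exact (key π).1),
      pad n π.plain π.plain_pos (key π).2,
      ⟨∑ x ∈ π.over', x, Nat.lt_succ_of_le (key π).1⟩))
  intro π₁ π₂ h
  rw [Prod.mk.injEq, Prod.mk.injEq, Fin.mk.injEq] at h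
  obtain ⟨h1, h2, h3⟩ := h
  have hsum : π₁.plain.sum = π₂.plain.sum := by
    have e1 := π₁.sum_eq
    have e2 := π₂.sum_eq
    omega
  have hover : π₁.over'.1 = π₂.over'.1 := by
    apply pad_inj _ h1
    rw [← sum_val, ← sum_val]; exact h3
  exact op_ext (Finset.val_injective hover) (pad_inj hsum h2)

/-! ### Counting lemmas -/

lemma card_split {α : Type*} [Finite α] (p q : α → Prop) :
    Nat.card {x : α // p x} =
      Nat.card {x : α // p x ∧ q x} + Nat.card {x : α // p x ∧ ¬ q x} := by
  rw [← Nat.card_sum]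
  refine Nat.card_congr ?_
  exact (Equiv.sumCompl fun x : Subtype p => q x.1).symm.trans
    (Equiv.sumCongr (Equiv.subtypeSubtypeEquivSubtypeInter p q)
      (Equiv.subtypeSubtypeEquivSubtypeInter p fun x => ¬ q x))

lemma lOleN_zero {π : Overpartition n} (h : π.plain = 0) :
    lOleN π = π.over'.card := if_pos h

/-- overpartitions with no plain part, of given count parity, are
distinct-part partitions of that parity -/
noncomputable def eqvB (P : ℕ → Prop) :
    {π : Overpartition n // P (lOleN π) ∧ π.plain = 0} ≃
    {p : n.Partition // p.parts.Nodup ∧ P (Multiset.card p.parts)} where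
  toFun x := ⟨⟨x.1.over'.1, fun {i} hi => x.1.over_pos i hi, by
      have := x.1.sum_eq
      rw [x.2.2] at this
      rw [← sum_val]
      simpa using this⟩,
    x.1.over'.nodup, by
      have := x.2.1
      rwa [lOleN_zero x.2.2] at this⟩
  invFun y := ⟨⟨⟨y.1.parts, y.2.1⟩, 0,
      fun i hi => y.1.parts_pos hi, by simp, by
        rw [sum_val]
        simpa using y.1.parts_sum⟩, by
      constructor
      · rw [lOleN_zero rfl]
        exact y.2.2
      · rfl⟩
  left_inv x := by
    apply Subtype.ext
    apply op_ext
    · rfl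
    · exact x.2.2.symm
  right_inv y := by
    apply Subtype.ext
    apply Nat.Partition.ext
    rfl

lemma isF_Sset_empty {π : Overpartition n} (h : isF π) : Sset π = ∅ := h.2

lemma lOleN_of_isF {π : Overpartition n} (h0 : ¬ π.plain = 0) (hF : isF π) :
    lOleN π = 0 := by
  rw [lOleN_eq_card h0, hF.2, Finset.card_empty]

/-- the fixed points with a plain part are distinct-part partitions -/
noncomputable def eqvF (hn : 1 ≤ n) :
    {π : Overpartition n // ¬ π.plain = 0 ∧ isF π} ≃
    {p : n.Partition // p.parts.Nodup} where
  toFun x := ⟨⟨x.1.plain + x.1.over'.1,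
      fun {i} hi => by
        rcases Multiset.mem_add.1 hi with h | h
        · exact x.1.plain_pos i h
        · exact x.1.over_pos i h, by
        rw [Multiset.sum_add, ← sum_val]
        have := x.1.sum_eq
        omega⟩, by
      obtain ⟨L, hL⟩ := Multiset.card_eq_one.1 x.2.2.1
      show Multiset.Nodup ((x.1).plain + (x.1).over'.val)
      rw [hL, Multiset.singleton_add, Multiset.nodup_cons]
      refine ⟨fun hLo => ?_, x.1.over'.nodup⟩
      have : L ∈ Sset x.1 := Finset.mem_filter.2
        ⟨hLo, ⟨L, by rw [hL]; exact Multiset.mem_singleton_self L, le_rfl⟩⟩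
      rw [x.2.2.2] at this
      exact Finset.notMem_empty _ this⟩
  invFun y := by
    have hne : y.1.parts ≠ 0 := by
      intro h
      have := y.1.parts_sum
      rw [h] at this
      simp at this
      omega
    have hfne : y.1.parts.toFinset.Nonempty := Multiset.toFinset_nonempty.2 hne
    set L := y.1.parts.toFinset.min' hfne with hLdef
    have hLmem : L ∈ y.1.parts := Multiset.mem_toFinset.1 (Finset.min'_mem _ _)
    have hLle : ∀ b ∈ y.1.parts, L ≤ b := fun b hb =>
      Finset.min'_le _ _ (Multiset.mem_toFinset.2 hb)
    refine ⟨⟨⟨y.1.parts.erase L, y.2.erase L⟩, {L},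
      fun i hi => y.1.parts_pos (Multiset.mem_of_mem_erase hi),
      fun i hi => y.1.parts_pos (by rw [Multiset.mem_singleton.1 hi]; exact hLmem),
      ?_⟩, ?_, ?_, ?_⟩
    · rw [sum_val, Multiset.sum_singleton]
      have := Multiset.cons_erase hLmem
      have h2 : (L ::ₘ y.1.parts.erase L).sum = y.1.parts.sum := by rw [this]
      rw [Multiset.sum_cons] at h2
      have := y.1.parts_sum
      simpa using by omega
    · simp
    · simp [Multiset.card_singleton]
    · apply Finset.eq_empty_of_forall_notMem
      intro x hx
      obtain ⟨hxo, z, hz, hxz⟩ := Finset.mem_filter.1 hx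
      rw [Multiset.mem_singleton.1 hz] at hxz
      have hxe : x ∈ y.1.parts.erase L := hxo
      rw [y.2.mem_erase_iff] at hxe
      exact hxe.1 (le_antisymm hxz (hLle x hxe.2))
  left_inv x := by
    obtain ⟨L₀, hL₀⟩ := Multiset.card_eq_one.1 x.2.2.1
    have hparts : x.1.plain + x.1.over'.1 = L₀ ::ₘ x.1.over'.1 := by
      rw [hL₀, Multiset.singleton_add]
    have hLmin : ∀ b ∈ x.1.plain + x.1.over'.1, L₀ ≤ b := by
      intro b hb
      rcases Multiset.mem_add.1 hb with h | h
      · rw [hL₀, Multiset.mem_singleton] at h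
        omega
      · by_contra hc
        have : b ∈ Sset x.1 := Finset.mem_filter.2
          ⟨h, ⟨L₀, by rw [hL₀]; exact Multiset.mem_singleton_self _, by omega⟩⟩
        rw [x.2.2.2] at this
        exact Finset.notMem_empty _ this
    have hL₀mem : L₀ ∈ x.1.plain + x.1.over'.1 := by
      rw [hparts]; exact Multiset.mem_cons_self _ _
    have hmin : (x.1.plain + x.1.over'.1).toFinset.min'
        (Multiset.toFinset_nonempty.2 (by rw [hparts]; exact Multiset.cons_ne_zero))
          = L₀ := by
      apply le_antisymm
      · exact Finset.min'_le _ _ (Multiset.mem_toFinset.2 hL₀mem)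
      · apply Finset.le_min'
        intro b hb
        exact hLmin b (Multiset.mem_toFinset.1 hb)
      
    apply Subtype.ext
    apply op_ext
    · apply Finset.val_injective
      show (x.1.plain + x.1.over'.1).erase _ = x.1.over'.1
      rw [hmin, hparts, Multiset.erase_cons_head]
    · show ({_} : Multiset ℕ) = x.1.plain
      rw [hmin, hL₀]
  right_inv y := by
    apply Subtype.ext
    apply Nat.Partition.ext
    show ({_} : Multiset ℕ) + y.1.parts.erase _ = y.1.parts
    have hne : y.1.parts ≠ 0 := by
      intro h
      have := y.1.parts_sum
      rw [h] at this
      simp at this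
      omega
    have hLmem : y.1.parts.toFinset.min' (Multiset.toFinset_nonempty.2 hne)
        ∈ y.1.parts := Multiset.mem_toFinset.1 (Finset.min'_mem _ _)
    rw [Multiset.singleton_add, Multiset.cons_erase hLmem]

lemma card_odd_F :
    Nat.card {π : Overpartition n //
      (Odd (lOleN π) ∧ ¬ π.plain = 0) ∧ isF π} = 0 := by
  have : IsEmpty {π : Overpartition n //
      (Odd (lOleN π) ∧ ¬ π.plain = 0) ∧ isF π} := by
    constructor
    rintro ⟨π, ⟨hodd, h0⟩, hF⟩
    rw [lOleN_of_isF h0 hF] at hodd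
    simp at hodd
  exact Nat.card_of_isEmpty

end OPProof

theorem stmt_4 (n : ℕ) (hn : 1 ≤ n) :
    (Nat.card {π : Overpartition n // Even (lOleN π)} : ℤ) -
      Nat.card {π : Overpartition n // Odd (lOleN π)} =
    2 * Nat.card {p : n.Partition //
        p.parts.Nodup ∧ Even (Multiset.card p.parts)} := by
  classical
  open OPProof in
  set De := Nat.card {p : n.Partition //
      p.parts.Nodup ∧ Even (Multiset.card p.parts)} with hDe
  set Do := Nat.card {p : n.Partition //
      p.parts.Nodup ∧ Odd (Multiset.card p.parts)} with hDo
  set c := Nat.card {π : Overpartition n // Even (lOleN π) ∧ inC π} with hc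
  -- split the even side
  have hE : Nat.card {π : Overpartition n // Even (lOleN π)} =
      De + ((De + Do) + c) := by
    rw [card_split (fun π : Overpartition n => Even (lOleN π))
      (fun π => π.plain = 0)]
    rw [card_split (fun π : Overpartition n => Even (lOleN π) ∧ ¬ π.plain = 0)
      (fun π => isF π)]
    congr 1
    · exact Nat.card_congr (eqvB Even)
    congr 1
    · have e1 : Nat.card {π : Overpartition n //
          (Even (lOleN π) ∧ ¬ π.plain = 0) ∧ isF π} =
          Nat.card {p : n.Partition // p.parts.Nodup} :=
        Nat.card_congr ((Equiv.subtypeEquivRight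
          (p := fun π : Overpartition n => (Even (lOleN π) ∧ ¬ π.plain = 0) ∧ isF π)
          (q := fun π : Overpartition n => ¬ π.plain = 0 ∧ isF π)
          (fun π => ⟨fun h => ⟨h.1.2, h.2⟩,
            fun h => ⟨⟨by rw [lOleN_of_isF h.1 h.2]; exact Even.zero, h.1⟩, h.2⟩⟩)).trans
          (eqvF hn))
      rw [e1, card_split (fun p : n.Partition => p.parts.Nodup)
        (fun p => Even (Multiset.card p.parts))]
      congr 1
      exact Nat.card_congr (Equiv.subtypeEquivRight
        (p := fun p : n.Partition => p.parts.Nodup ∧ ¬ Even (Multiset.card p.parts))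
        (q := fun p : n.Partition => p.parts.Nodup ∧ Odd (Multiset.card p.parts))
        (fun p => and_congr_right fun _ => Nat.not_even_iff_odd))
    · exact Nat.card_congr (Equiv.subtypeEquivRight
        (p := fun π : Overpartition n => (Even (lOleN π) ∧ ¬ π.plain = 0) ∧ ¬ isF π)
        (q := fun π : Overpartition n => Even (lOleN π) ∧ inC π)
        (fun π => ⟨fun h => ⟨h.1.1, h.1.2, h.2⟩, fun h => ⟨⟨h.1, h.2.1⟩, h.2.2⟩⟩))
  -- split the odd side
  have hO : Nat.card {π : Overpartition n // Odd (lOleN π)} =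
      Do + (0 + c) := by
    rw [card_split (fun π : Overpartition n => Odd (lOleN π))
      (fun π => π.plain = 0)]
    rw [card_split (fun π : Overpartition n => Odd (lOleN π) ∧ ¬ π.plain = 0)
      (fun π => isF π)]
    congr 1
    · exact Nat.card_congr (eqvB Odd)
    congr 1
    · exact card_odd_F
    · rw [hc, Nat.card_congr (eqvC (n := n))]
      exact (Nat.card_congr (Equiv.subtypeEquivRight
        (p := fun π : Overpartition n => (Odd (lOleN π) ∧ ¬ π.plain = 0) ∧ ¬ isF π)
        (q := fun π : Overpartition n => Odd (lOleN π) ∧ inC π)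
        (fun π => ⟨fun h => ⟨h.1.1, h.1.2, h.2⟩, fun h => ⟨⟨h.1, h.2.1⟩, h.2.2⟩⟩)))
  rw [hE, hO]
  push_cast
  ring
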